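/- Let s be a section of the flat real line bundle V over ℂ* × ℝ^{n-2} with holonomy −1 around the singular set {0}×ℝ^{n-2} (equivalently, an odd function under w ↦ −w on the double cover (w,t) ↦ (w²,t)). Suppose s satisfies the Hölder bound |s(p) − s(p')| ≤ K|p − p'|^α for all pairs p=(z,t), p'=(z',t') with |p−p'| ≤ (1/2)min(|z|,|z'|), comparing via parallel transport. Then |s(z,t)| ≤ C K |z|^α for a constant C depending only on α and n. -/

import Mathlib

/-- The distance downstairs on `ℂ × ℝ^{n-2}` between the images of `(w,t)` and
`(w',t')` under the double branched cover `(w,t) ↦ (w²,t)`. -/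
noncomputable def coverDist (m : ℕ) (w w' : ℂ)
    (t t' : EuclideanSpace ℝ (Fin m)) : ℝ :=
  Real.sqrt (‖w ^ 2 - w' ^ 2‖ ^ 2 + ‖t - t'‖ ^ 2)

/-- a section `s` of the flat line bundle `V` with monodromy `−1`
around `{0} × ℝ^{n-2}` — realized as an odd function on the double cover
`(w,t) ↦ (w², t)` — satisfying the restricted Hölder bound
`|s(p) − s(p')| ≤ K |p − p'|^α` for pairs with `|p − p'| ≤ ½ min(|z|, |z'|)`
(compared via parallel transport, i.e. using lifts on the same sheet) satisfies
the pointwise bound `|s(z,t)| ≤ C K |z|^α`, with `C` depending only on `α`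
and `n`. Here `n = m + 2`, `z = w²`. -/
theorem holder_section_vanishing (m : ℕ) (α : ℝ) (hα : 0 < α) (hα' : α < 1/2) :
    ∃ C : ℝ, 0 < C ∧
      ∀ (s : ℂ → EuclideanSpace ℝ (Fin m) → ℝ) (K : ℝ), 0 ≤ K →
        (∀ w t, s (-w) t = - s w t) →
        (∀ w w' t t',
          coverDist m w w' t t' ≤ (1/2) * min (‖w‖ ^ 2) (‖w'‖ ^ 2) →
          ‖w - w'‖ ≤ ‖w + w'‖ →
          |s w t - s w' t'| ≤ K * (coverDist m w w' t t') ^ α) →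
        ∀ w t, |s w t| ≤ C * K * (‖w‖ ^ 2) ^ α := by
  refine ⟨16, by norm_num, ?_⟩
  intro s K hK hodd hH w t
  have hπ : (0:ℝ) < Real.pi := Real.pi_pos
  have hπ4 : Real.pi < 4 := by
    have := Real.pi_lt_d2; linarith
  set θ : ℝ := Real.pi / 32 with hθdef
  have hθ0 : 0 < θ := by positivity
  have hθ1 : 2 * θ ≤ 1 := by rw [hθdef]; linarith
  set f : ℕ → ℂ := fun k => w * Complex.exp (((k : ℝ) * θ : ℝ) * Complex.I) with hf
  have habs : ∀ k : ℕ, ‖f k‖ = ‖w‖ := by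
    intro k
    simp only [hf]
    rw [norm_mul, Complex.norm_exp_ofReal_mul_I, mul_one]
  -- general exponential estimate
  have hc : ∀ x : ℝ, 0 ≤ x → x ≤ 1 →
      ‖Complex.exp ((x : ℂ) * Complex.I) - 1‖ ≤ 2 * x := by
    intro x hx0 hx1
    have h1 : ‖(x : ℂ) * Complex.I‖ = x := by
      simp [abs_of_nonneg hx0]
    have := Complex.norm_exp_sub_one_le (x := (x : ℂ) * Complex.I) (by rw [h1]; exact hx1)
    rwa [h1] at this
  -- the one–step Hölder estimate
  have hstep : ∀ k : ℕ, |s (f k) t - s (f (k+1)) t| ≤ K * ((‖w‖ ^ 2) ^ α) := by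
    intro k
    have hrec : f (k+1) = f k * Complex.exp ((θ : ℂ) * Complex.I) := by
      rw [hf]
      simp only
      rw [mul_assoc, ← Complex.exp_add]
      congr 2
      push_cast
      ring
    have hsq : (f (k+1)) ^ 2 = (f k) ^ 2 * Complex.exp (((2*θ : ℝ) : ℂ) * Complex.I) := by
      rw [hrec, mul_pow, sq (Complex.exp _), ← Complex.exp_add]
      congr 2
      push_cast
      ring
    set e₁ : ℂ := Complex.exp ((θ : ℂ) * Complex.I) with he₁
    set e₂ : ℂ := Complex.exp (((2*θ : ℝ) : ℂ) * Complex.I) with he₂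
    have hc₁ : ‖e₁ - 1‖ ≤ 2 * θ := by
      have := hc θ hθ0.le (by linarith)
      simpa [he₁] using this
    have hc₂ : ‖e₂ - 1‖ ≤ 1/2 := by
      have h2θ0 : (0:ℝ) ≤ 2*θ := by linarith
      have := hc (2*θ) h2θ0 hθ1
      have h4θ : 2 * (2*θ) ≤ 1/2 := by rw [hθdef]; linarith
      calc ‖e₂ - 1‖ ≤ 2 * (2*θ) := this
        _ ≤ 1/2 := h4θ
    -- computation of the cover distance for one step
    have hd : coverDist m (f k) (f (k+1)) t t
        = ‖w‖ ^ 2 * ‖e₂ - 1‖ := by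
      unfold coverDist
      rw [sub_self t, norm_zero]
      have h0 : (0:ℝ) ^ 2 = 0 := by ring
      rw [h0, add_zero, Real.sqrt_sq (norm_nonneg _)]
      rw [hsq]
      have : (f k) ^ 2 - (f k) ^ 2 * e₂ = (f k) ^ 2 * (1 - e₂) := by ring
      rw [this, norm_mul, norm_pow, habs, norm_sub_rev]
    -- condition 1 of the Hölder hypothesis
    have hcond1 : coverDist m (f k) (f (k+1)) t t
        ≤ (1/2) * min (‖f k‖ ^ 2) (‖f (k+1)‖ ^ 2) := by
      rw [hd, habs, habs, min_self]
      have hw2 : (0:ℝ) ≤ ‖w‖ ^ 2 := by positivity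
      calc ‖w‖ ^ 2 * ‖e₂ - 1‖
          ≤ ‖w‖ ^ 2 * (1/2) := by
            exact mul_le_mul_of_nonneg_left hc₂ hw2
        _ = (1/2) * ‖w‖ ^ 2 := by ring
    -- condition 2 (same–sheet comparison)
    have hcond2 : ‖f k - f (k+1)‖ ≤ ‖f k + f (k+1)‖ := by
      rw [hrec]
      have h1 : f k - f k * e₁ = f k * (1 - e₁) := by ring
      have h2 : f k + f k * e₁ = f k * (1 + e₁) := by ring
      have h1' : ‖f k * (1 - e₁)‖ = ‖f k‖ * ‖1 - e₁‖ :=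
        norm_mul _ _
      have h2' : ‖f k * (1 + e₁)‖ = ‖f k‖ * ‖1 + e₁‖ :=
        norm_mul _ _
      rw [h1, h2, h1', h2']
      refine mul_le_mul_of_nonneg_left ?_ (norm_nonneg _)
      have hA : ‖1 - e₁‖ ≤ 1 := by
        rw [norm_sub_rev]
        calc ‖e₁ - 1‖ ≤ 2 * θ := hc₁
          _ ≤ 1 := hθ1
      have hB : (1:ℝ) ≤ ‖1 + e₁‖ := by
        have h3 : (1:ℂ) + e₁ = 2 - (1 - e₁) := by ring
        have h4 : ‖(2:ℂ)‖ - ‖1 - e₁‖ ≤ ‖2 - (1 - e₁)‖ := by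
          exact le_trans (le_abs_self _) (abs_norm_sub_norm_le _ _)
      -- |2| = 2
        have h5 : ‖(2:ℂ)‖ = 2 := by norm_num
        rw [h3]
        rw [h5] at h4
        linarith
      linarith
    -- apply the Hölder hypothesis and enlarge the distance
    have hH1 := hH (f k) (f (k+1)) t t hcond1 hcond2
    have hdle : coverDist m (f k) (f (k+1)) t t ≤ ‖w‖ ^ 2 := by
      rw [hd]
      have hw2 : (0:ℝ) ≤ ‖w‖ ^ 2 := by positivity
      calc ‖w‖ ^ 2 * ‖e₂ - 1‖
          ≤ ‖w‖ ^ 2 * 1 := by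
            refine mul_le_mul_of_nonneg_left ?_ hw2
            linarith
        _ = ‖w‖ ^ 2 := by ring
    have hd0 : 0 ≤ coverDist m (f k) (f (k+1)) t t := Real.sqrt_nonneg _
    have hpow : (coverDist m (f k) (f (k+1)) t t) ^ α ≤ (‖w‖ ^ 2) ^ α :=
      Real.rpow_le_rpow hd0 hdle hα.le
    calc |s (f k) t - s (f (k+1)) t| ≤ K * (coverDist m (f k) (f (k+1)) t t) ^ α := hH1
      _ ≤ K * (‖w‖ ^ 2) ^ α := mul_le_mul_of_nonneg_left hpow hK
  -- telescoping
  have key : ∀ k : ℕ, |s w t - s (f k) t| ≤ k * (K * (‖w‖ ^ 2) ^ α) := by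
    intro k
    induction k with
    | zero => simp [hf]
    | succ n ih =>
      have h1 := hstep n
      have htri := abs_sub_le (s w t) (s (f n) t) (s (f (n+1)) t)
      calc |s w t - s (f (n+1)) t|
          ≤ |s w t - s (f n) t| + |s (f n) t - s (f (n+1)) t| := htri
        _ ≤ n * (K * (‖w‖ ^ 2) ^ α) + K * (‖w‖ ^ 2) ^ α :=
            add_le_add ih h1
        _ = (n + 1 : ℕ) * (K * (‖w‖ ^ 2) ^ α) := by push_cast; ring
  have h32 : f 32 = -w := by
    rw [hf]
    simp only
    have hcast : (((32:ℕ) : ℝ) * θ : ℝ) = Real.pi := by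
      rw [hθdef]; ring
    rw [hcast, Complex.exp_pi_mul_I]
    ring
  have hkey := key 32
  rw [h32, hodd] at hkey
  have h2 : |s w t - - s w t| = 2 * |s w t| := by
    rw [sub_neg_eq_add, ← two_mul, abs_mul]
    norm_num
  rw [h2] at hkey
  push_cast at hkey
  calc |s w t| ≤ 16 * (K * (‖w‖ ^ 2) ^ α) := by linarith
    _ = 16 * K * (‖w‖ ^ 2) ^ α := by ring
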